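/- With V^ms = (id − 𝒞)V_H the ideal multiscale space and W_{div0} = {w ∈ ker π_H : div w = 0}, the sum V^ms ⊕ W_{div0} is a-orthogonal but is a proper subspace of H₀(div,Ω); indeed div(V^ms ⊕ W_{div0}) = div(V_H) ⊊ div(H₀(div,Ω)). -/

import Mathlib

/-- **`V^ms ⊕ W_{div0}` is `a`-orthogonal but a proper subspace of `H₀(div,Ω)`.**
`H = H₀(div,Ω)`, `D` the divergence, `π` the stable commuting projection onto the
Raviart–Thomas space `V_H = im π`, `W_{div0} = ker π ⊓ ker D`, and `𝒞` the ideal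
correction operator (`a(𝒞v,w) = a(v,w)` for all `w ∈ W_{div0}`), where
`a(u,v) = (A⁻¹u, v)` is a bilinear form.  Since `div V_H` is finite dimensional while
`div H₀(div,Ω)` is not, the `a`-orthogonal sum `V^ms ⊔ W_{div0}` satisfies
`div(V^ms ⊔ W_{div0}) = div V_H ⊊ div H₀(div,Ω)` and is a proper subspace of `H`. -/
theorem ideal_space_proper
    {H L : Type*}
    [NormedAddCommGroup H] [InnerProductSpace ℝ H] [CompleteSpace H]
    [NormedAddCommGroup L] [InnerProductSpace ℝ L] [CompleteSpace L]
    (a : H →ₗ[ℝ] H →ₗ[ℝ] ℝ) (hsym : ∀ v w : H, a v w = a w v)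
    (D : H →L[ℝ] L) (P : L →L[ℝ] L)
    (π 𝒞 : H →L[ℝ] H) (hπproj : ∀ v : H, π (π v) = π v)
    (hcomm : ∀ v : H, D (π v) = P (D v))
    (h𝒞mem : ∀ v : H, 𝒞 v ∈ LinearMap.ker (π : H →ₗ[ℝ] H) ⊓ LinearMap.ker (D : H →ₗ[ℝ] L))
    (h𝒞eq : ∀ v : H, ∀ w ∈ LinearMap.ker (π : H →ₗ[ℝ] H) ⊓ LinearMap.ker (D : H →ₗ[ℝ] L), a (𝒞 v) w = a v w)
    (hfin : FiniteDimensional ℝ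
      (Submodule.map (D : H →ₗ[ℝ] L) (LinearMap.range (π : H →ₗ[ℝ] H))))
    (hinf : ¬ FiniteDimensional ℝ (LinearMap.range (D : H →ₗ[ℝ] L))) :
    (∀ vms ∈ Submodule.map ((ContinuousLinearMap.id ℝ H - 𝒞) : H →ₗ[ℝ] H)
        (LinearMap.range (π : H →ₗ[ℝ] H)),
      ∀ w ∈ LinearMap.ker (π : H →ₗ[ℝ] H) ⊓ LinearMap.ker (D : H →ₗ[ℝ] L), a vms w = 0) ∧
    Submodule.map (D : H →ₗ[ℝ] L)
        ((Submodule.map ((ContinuousLinearMap.id ℝ H - 𝒞) : H →ₗ[ℝ] H)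
            (LinearMap.range (π : H →ₗ[ℝ] H))) ⊔ (LinearMap.ker (π : H →ₗ[ℝ] H) ⊓ LinearMap.ker (D : H →ₗ[ℝ] L))) =
      Submodule.map (D : H →ₗ[ℝ] L) (LinearMap.range (π : H →ₗ[ℝ] H)) ∧
    Submodule.map (D : H →ₗ[ℝ] L) (LinearMap.range (π : H →ₗ[ℝ] H)) < LinearMap.range (D : H →ₗ[ℝ] L) ∧
    ((Submodule.map ((ContinuousLinearMap.id ℝ H - 𝒞) : H →ₗ[ℝ] H)
        (LinearMap.range (π : H →ₗ[ℝ] H))) ⊔ (LinearMap.ker (π : H →ₗ[ℝ] H) ⊓ LinearMap.ker (D : H →ₗ[ℝ] L))) ≠ ⊤ := by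
  have horth : ∀ vms ∈ Submodule.map ((ContinuousLinearMap.id ℝ H - 𝒞) : H →ₗ[ℝ] H)
      (LinearMap.range (π : H →ₗ[ℝ] H)),
      ∀ w ∈ LinearMap.ker (π : H →ₗ[ℝ] H) ⊓ LinearMap.ker (D : H →ₗ[ℝ] L), a vms w = 0 := by
    rintro vms ⟨v, _, rfl⟩ w hw
    simp only [ContinuousLinearMap.coe_coe, ContinuousLinearMap.sub_apply,
      ContinuousLinearMap.id_apply, map_sub, LinearMap.sub_apply]
    rw [h𝒞eq v w hw]; ring
  have hDeq : Submodule.map (D : H →ₗ[ℝ] L)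
      ((Submodule.map ((ContinuousLinearMap.id ℝ H - 𝒞) : H →ₗ[ℝ] H)
          (LinearMap.range (π : H →ₗ[ℝ] H))) ⊔ (LinearMap.ker (π : H →ₗ[ℝ] H) ⊓ LinearMap.ker (D : H →ₗ[ℝ] L))) =
      Submodule.map (D : H →ₗ[ℝ] L) (LinearMap.range (π : H →ₗ[ℝ] H)) := by
    apply le_antisymm
    · rw [Submodule.map_sup, sup_le_iff]
      constructor
      · rw [Submodule.map_comp ((ContinuousLinearMap.id ℝ H - 𝒞) : H →ₗ[ℝ] H)
          (D : H →ₗ[ℝ] L) (LinearMap.range (π : H →ₗ[ℝ] H)) |>.symm] at *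
        apply Submodule.map_le_iff_le_comap.mpr
        rintro v hv
        have h0 : D (𝒞 v) = 0 := (h𝒞mem v).2
        simp only [Submodule.mem_comap, LinearMap.comp_apply, LinearMap.sub_apply,
          ContinuousLinearMap.coe_coe, ContinuousLinearMap.id_apply, map_sub, h0, sub_zero]
        exact ⟨v, hv, rfl⟩
      · rintro x ⟨w, hw, rfl⟩
        have : D w = 0 := hw.2
        simp only [ContinuousLinearMap.coe_coe, this]
        exact (Submodule.map (D : H →ₗ[ℝ] L) (LinearMap.range (π : H →ₗ[ℝ] H))).zero_mem
    · rintro x ⟨v, hv, rfl⟩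
      refine ⟨v - 𝒞 v, Submodule.mem_sup_left ⟨v, hv, rfl⟩, ?_⟩
      have : D (𝒞 v) = 0 := (h𝒞mem v).2
      simp [map_sub, this]
  have hlt : Submodule.map (D : H →ₗ[ℝ] L) (LinearMap.range (π : H →ₗ[ℝ] H)) < LinearMap.range (D : H →ₗ[ℝ] L) := by
    refine lt_of_le_of_ne ?_ ?_
    · rintro x ⟨v, _, rfl⟩; exact ⟨v, rfl⟩
    · intro h; rw [h] at hfin; exact hinf hfin
  refine ⟨horth, hDeq, hlt, ?_⟩
  intro htop
  have : Submodule.map (D : H →ₗ[ℝ] L) (⊤ : Submodule ℝ H) =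
      Submodule.map (D : H →ₗ[ℝ] L) (LinearMap.range (π : H →ₗ[ℝ] H)) := by rw [← htop, hDeq]
  rw [Submodule.map_top] at this
  exact hlt.ne' this
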